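/- Let N₁, N₂ ≥ 1 be integers, set δ = π/(2N₁ + 2N₂ − 1) and q = −cos((4N₁−1)π/(4N₁+4N₂−2))/cos(π/(4N₁+4N₂−2)). Let a > c be reals and set b = (a + c)/2 − q·(a − c)/2 (so that (a − 2b + c)/(a − c) = q). Define f₁(m) = √((a−c)/cos(δ/2))·sin(δm/2) and f₂(m) = √((a−c)/cos(δ/2))·cos(δm/2) for m ∈ ℤ. Then: (A) if g₁ : ℤ → ℝ satisfies g₁(m)g₁(m+1) = (a−b) − f₁(m)f₁(m+1) for all integers m with −2N₁ ≤ m ≤ 2N₁ − 1, then g₁(−2N₁) = 0, g₁(2N₁) = 0, and g₁(m)·g₁(m') > 0 for all integers m, m' with −2N₁ < m, m' < 2N₁ (so g₁ vanishes exactly at the boundary and does not change sign in the interior); and (B) if g₂ : ℤ → ℝ satisfies g₂(m)g₂(m+1) = f₂(m)f₂(m+1) − (a−b) for all integers m with −2N₂ ≤ m ≤ 2N₂ − 1, then g₂(−2N₂) = 0, g₂(2N₂) = 0, and g₂(m)·g₂(m') > 0 for all integers m, m' with −2N₂ < m, m' < 2N₂. -/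

import Mathlib

open Real

lemma sign_chain (n : ℤ) (hn : 2 ≤ n) (g R : ℤ → ℝ)
    (hg : ∀ m : ℤ, -n ≤ m → m ≤ n - 1 → g m * g (m + 1) = R m)
    (hR0 : R (-n) = 0) (hR1 : R (n - 1) = 0)
    (hRpos : ∀ m : ℤ, -n < m → m < n - 1 → 0 < R m) :
    g (-n) = 0 ∧ g n = 0 ∧
      ∀ m m' : ℤ, -n < m → m < n → -n < m' → m' < n → 0 < g m * g m' := by
  have hpos : ∀ m : ℤ, -n < m → m < n - 1 → 0 < g m * g (m + 1) := by
    intro m h1 h2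
    rw [hg m h1.le (by omega)]
    exact hRpos m h1 h2
  have gne : ∀ m : ℤ, -n < m → m < n → g m ≠ 0 := by
    intro m h1 h2
    rcases lt_or_ge m (n - 1) with h | h
    · exact left_ne_zero_of_mul (hpos m h1 h).ne'
    · have hm : m = n - 1 := by omega
      subst hm
      have h3 := hpos (n - 2) (by omega) (by omega)
      rw [show n - 2 + 1 = n - 1 by ring] at h3
      exact right_ne_zero_of_mul h3.ne'
  refine ⟨?_, ?_, ?_⟩
  · have h := hg (-n) le_rfl (by omega)
    rw [hR0] at h
    rcases mul_eq_zero.mp h with h | h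
    · exact h
    · exact absurd h (gne (-n + 1) (by omega) (by omega))
  · have h := hg (n - 1) (by omega) le_rfl
    rw [hR1, show n - 1 + 1 = n by ring] at h
    rcases mul_eq_zero.mp h with h | h
    · exact absurd h (gne (n - 1) (by omega) (by omega))
    · exact h
  · have key : ∀ m : ℤ, -n < m → ∀ m' : ℤ, m ≤ m' → m' < n → 0 < g m * g m' := by
      intro m h1
      refine fun m' hm' => Int.le_induction (motive := fun m' _ => m' < n → 0 < g m * g m') ?_ ?_ m' hm'
      · intro h3; exact mul_self_pos.mpr (gne m h1 h3)
      · intro k hk ih h3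
        have p1 := ih (by omega)
        have p2 := hpos k (by omega) (by omega)
        have hne := gne k (by omega) (by omega)
        have h4 : 0 < (g m * g (k + 1)) * (g k * g k) := by
          have : (g m * g (k + 1)) * (g k * g k) = (g m * g k) * (g k * g (k + 1)) := by ring
          rw [this]; exact mul_pos p1 p2
        have h5 : 0 < g k * g k := mul_self_pos.mpr hne
        nlinarith
    intro m m' h1 h2 h3 h4
    rcases le_total m m' with h | h
    · exact key m h1 m' h h4
    · rw [mul_comm]; exact key m' h3 m h h2

lemma cos_boundary_pos (N : ℕ) (t : ℝ) (ht : 0 < t) (hπ : (4 * (N : ℝ) - 1) * t ≤ π)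
    (m : ℤ) (h1 : -(2 * (N : ℤ)) < m) (h2 : m < 2 * (N : ℤ) - 1) :
    Real.cos ((4 * (N : ℝ) - 1) * t) < Real.cos ((2 * (m : ℝ) + 1) * t) := by
  have l1 : -(4 * (N : ℤ)) + 3 ≤ 2 * m + 1 := by omega
  have l2 : 2 * m + 1 ≤ 4 * (N : ℤ) - 3 := by omega
  have l1' : -(4 * (N : ℝ)) + 3 ≤ 2 * (m : ℝ) + 1 := by exact_mod_cast l1
  have l2' : 2 * (m : ℝ) + 1 ≤ 4 * (N : ℝ) - 3 := by exact_mod_cast l2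
  have habs : |2 * (m : ℝ) + 1| ≤ 4 * (N : ℝ) - 3 := abs_le.mpr ⟨by linarith, l2'⟩
  have hlt : |2 * (m : ℝ) + 1| * t < (4 * (N : ℝ) - 1) * t :=
    mul_lt_mul_of_pos_right (by linarith) ht
  calc Real.cos ((4 * (N : ℝ) - 1) * t)
      < Real.cos (|2 * (m : ℝ) + 1| * t) :=
        Real.cos_lt_cos_of_nonneg_of_le_pi (by positivity) hπ hlt
    _ = Real.cos (|(2 * (m : ℝ) + 1) * t|) := by rw [abs_mul, abs_of_pos ht]
    _ = Real.cos ((2 * (m : ℝ) + 1) * t) := Real.cos_abs _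

theorem boundary_conditions_for_closed_discrete_ellipsoid
    (N₁ N₂ : ℕ) (hN₁ : 1 ≤ N₁) (hN₂ : 1 ≤ N₂)
    (δ q : ℝ)
    (hδ : δ = Real.pi / (2 * (N₁ : ℝ) + 2 * (N₂ : ℝ) - 1))
    (hq : q = -(Real.cos ((4 * (N₁ : ℝ) - 1) * Real.pi / (4 * (N₁ : ℝ) + 4 * (N₂ : ℝ) - 2))
        / Real.cos (Real.pi / (4 * (N₁ : ℝ) + 4 * (N₂ : ℝ) - 2))))
    (a c : ℝ) (hac : c < a)
    (b : ℝ) (hb : b = (a + c) / 2 - q * (a - c) / 2)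
    (f₁ f₂ : ℤ → ℝ)
    (hf₁ : ∀ m : ℤ, f₁ m = Real.sqrt ((a - c) / Real.cos (δ / 2)) * Real.sin (δ * m / 2))
    (hf₂ : ∀ m : ℤ, f₂ m = Real.sqrt ((a - c) / Real.cos (δ / 2)) * Real.cos (δ * m / 2)) :
    (∀ g₁ : ℤ → ℝ,
      (∀ m : ℤ, -(2 * (N₁ : ℤ)) ≤ m → m ≤ 2 * (N₁ : ℤ) - 1 →
        g₁ m * g₁ (m + 1) = (a - b) - f₁ m * f₁ (m + 1)) →
      g₁ (-(2 * (N₁ : ℤ))) = 0 ∧ g₁ (2 * (N₁ : ℤ)) = 0 ∧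
        ∀ m m' : ℤ, -(2 * (N₁ : ℤ)) < m → m < 2 * (N₁ : ℤ) →
          -(2 * (N₁ : ℤ)) < m' → m' < 2 * (N₁ : ℤ) → 0 < g₁ m * g₁ m') ∧
    (∀ g₂ : ℤ → ℝ,
      (∀ m : ℤ, -(2 * (N₂ : ℤ)) ≤ m → m ≤ 2 * (N₂ : ℤ) - 1 →
        g₂ m * g₂ (m + 1) = f₂ m * f₂ (m + 1) - (a - b)) →
      g₂ (-(2 * (N₂ : ℤ))) = 0 ∧ g₂ (2 * (N₂ : ℤ)) = 0 ∧
        ∀ m m' : ℤ, -(2 * (N₂ : ℤ)) < m → m < 2 * (N₂ : ℤ) →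
          -(2 * (N₂ : ℤ)) < m' → m' < 2 * (N₂ : ℤ) → 0 < g₂ m * g₂ m') := by
  have hπ := Real.pi_pos
  have hn₁ : (1 : ℝ) ≤ (N₁ : ℝ) := by exact_mod_cast hN₁
  have hn₂ : (1 : ℝ) ≤ (N₂ : ℝ) := by exact_mod_cast hN₂
  have hS : (0 : ℝ) < 4 * (N₁ : ℝ) + 4 * (N₂ : ℝ) - 2 := by linarith
  have ht : δ / 2 = π / (4 * (N₁ : ℝ) + 4 * (N₂ : ℝ) - 2) := by
    rw [hδ, div_div]; congr 1; ring
  set t : ℝ := δ / 2 with ht_def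
  have hSt : (4 * (N₁ : ℝ) + 4 * (N₂ : ℝ) - 2) * t = π := by
    rw [ht, mul_div_cancel₀ _ hS.ne']
  have htpos : 0 < t := by rw [ht]; positivity
  have htlt : t < π / 2 := by
    rw [ht, div_lt_div_iff₀ hS (by norm_num : (0:ℝ) < 2)]
    nlinarith
  have hcos : 0 < Real.cos t :=
    Real.cos_pos_of_mem_Ioo ⟨by linarith, htlt⟩
  have hKpos : 0 < a - c := by linarith
  have hsq : Real.sqrt ((a - c) / Real.cos t) * Real.sqrt ((a - c) / Real.cos t)
      = (a - c) / Real.cos t := Real.mul_self_sqrt (by positivity)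
  have hqt : q * Real.cos t = -Real.cos ((4 * (N₁ : ℝ) - 1) * t) := by
    rw [hq, show (4 * (N₁ : ℝ) - 1) * π / (4 * (N₁ : ℝ) + 4 * (N₂ : ℝ) - 2)
        = (4 * (N₁ : ℝ) - 1) * t by rw [ht]; ring, ← ht]
    field_simp
  have hπ1 : (4 * (N₁ : ℝ) - 1) * t ≤ π := by
    nlinarith [hSt, htpos]
  have hπ2 : (4 * (N₂ : ℝ) - 1) * t ≤ π := by
    nlinarith [hSt, htpos]
  have hflip : Real.cos ((4 * (N₁ : ℝ) - 1) * t) = -Real.cos ((4 * (N₂ : ℝ) - 1) * t) := by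
    rw [show (4 * (N₁ : ℝ) - 1) * t = π - (4 * (N₂ : ℝ) - 1) * t by
      linear_combination hSt, Real.cos_pi_sub]
  have hqt2 : q * Real.cos t = Real.cos ((4 * (N₂ : ℝ) - 1) * t) := by
    rw [hqt, hflip]; ring
  have hsinmul : ∀ m : ℤ, Real.sin (δ * m / 2) * Real.sin (δ * (m + 1 : ℤ) / 2)
      = (Real.cos t - Real.cos ((2 * (m : ℝ) + 1) * t)) / 2 := by
    intro m
    have h := Real.cos_sub_cos t ((2 * (m : ℝ) + 1) * t)
    rw [show (t + (2 * (m : ℝ) + 1) * t) / 2 = δ * ((m : ℝ) + 1) / 2 by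
        rw [ht_def]; ring,
      show (t - (2 * (m : ℝ) + 1) * t) / 2 = -(δ * (m : ℝ) / 2) by
        rw [ht_def]; ring, Real.sin_neg] at h
    push_cast
    linarith [h]
  have hcosmul : ∀ m : ℤ, Real.cos (δ * m / 2) * Real.cos (δ * (m + 1 : ℤ) / 2)
      = (Real.cos t + Real.cos ((2 * (m : ℝ) + 1) * t)) / 2 := by
    intro m
    have h := Real.cos_add_cos t ((2 * (m : ℝ) + 1) * t)
    rw [show (t + (2 * (m : ℝ) + 1) * t) / 2 = δ * ((m : ℝ) + 1) / 2 by
        rw [ht_def]; ring,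
      show (t - (2 * (m : ℝ) + 1) * t) / 2 = -(δ * (m : ℝ) / 2) by
        rw [ht_def]; ring, Real.cos_neg] at h
    push_cast
    linarith [h]
  have hcne : Real.cos t ≠ 0 := hcos.ne'
  have hR₁ : ∀ m : ℤ, (a - b) - f₁ m * f₁ (m + 1)
      = (a - c) / (2 * Real.cos t) *
        (Real.cos ((2 * (m : ℝ) + 1) * t) - Real.cos ((4 * (N₁ : ℝ) - 1) * t)) := by
    intro m
    have hprod : f₁ m * f₁ (m + 1)
        = (a - c) / Real.cos t * ((Real.cos t - Real.cos ((2 * (m : ℝ) + 1) * t)) / 2) := by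
      rw [hf₁ m, hf₁ (m + 1), mul_mul_mul_comm, hsq, hsinmul m]
    rw [hprod, hb]
    field_simp
    linear_combination (norm := ring_nf) (a - c) * hqt
  have hR₂ : ∀ m : ℤ, f₂ m * f₂ (m + 1) - (a - b)
      = (a - c) / (2 * Real.cos t) *
        (Real.cos ((2 * (m : ℝ) + 1) * t) - Real.cos ((4 * (N₂ : ℝ) - 1) * t)) := by
    intro m
    have hprod : f₂ m * f₂ (m + 1)
        = (a - c) / Real.cos t * ((Real.cos t + Real.cos ((2 * (m : ℝ) + 1) * t)) / 2) := by
      rw [hf₂ m, hf₂ (m + 1), mul_mul_mul_comm, hsq, hcosmul m]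
    rw [hprod, hb]
    field_simp
    linear_combination (norm := ring_nf) (-(a - c)) * hqt2
  constructor
  · intro g₁ hg₁
    have hN₁' : (2 : ℤ) ≤ 2 * (N₁ : ℤ) := by
      have : (1 : ℤ) ≤ (N₁ : ℤ) := by exact_mod_cast hN₁
      omega
    refine sign_chain (2 * (N₁ : ℤ)) hN₁' g₁
      (fun m => (a - c) / (2 * Real.cos t) *
        (Real.cos ((2 * (m : ℝ) + 1) * t) - Real.cos ((4 * (N₁ : ℝ) - 1) * t)))
      (fun m h1 h2 => by rw [hg₁ m h1 h2]; exact hR₁ m) ?_ ?_ ?_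
    · show (a - c) / (2 * Real.cos t) *
        (Real.cos ((2 * ((-(2 * (N₁ : ℤ)) : ℤ) : ℝ) + 1) * t)
          - Real.cos ((4 * (N₁ : ℝ) - 1) * t)) = 0
      rw [show (2 * ((-(2 * (N₁ : ℤ)) : ℤ) : ℝ) + 1) * t = -((4 * (N₁ : ℝ) - 1) * t) by
        push_cast; ring, Real.cos_neg, sub_self, mul_zero]
    · show (a - c) / (2 * Real.cos t) *
        (Real.cos ((2 * ((2 * (N₁ : ℤ) - 1 : ℤ) : ℝ) + 1) * t)
          - Real.cos ((4 * (N₁ : ℝ) - 1) * t)) = 0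
      rw [show (2 * ((2 * (N₁ : ℤ) - 1 : ℤ) : ℝ) + 1) * t = (4 * (N₁ : ℝ) - 1) * t by
        push_cast; ring, sub_self, mul_zero]
    · intro m h1 h2
      exact mul_pos (by positivity)
        (sub_pos.mpr (cos_boundary_pos N₁ t htpos hπ1 m h1 h2))
  · intro g₂ hg₂
    have hN₂' : (2 : ℤ) ≤ 2 * (N₂ : ℤ) := by
      have : (1 : ℤ) ≤ (N₂ : ℤ) := by exact_mod_cast hN₂
      omega
    refine sign_chain (2 * (N₂ : ℤ)) hN₂' g₂
      (fun m => (a - c) / (2 * Real.cos t) *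
        (Real.cos ((2 * (m : ℝ) + 1) * t) - Real.cos ((4 * (N₂ : ℝ) - 1) * t)))
      (fun m h1 h2 => by rw [hg₂ m h1 h2]; exact hR₂ m) ?_ ?_ ?_
    · show (a - c) / (2 * Real.cos t) *
        (Real.cos ((2 * ((-(2 * (N₂ : ℤ)) : ℤ) : ℝ) + 1) * t)
          - Real.cos ((4 * (N₂ : ℝ) - 1) * t)) = 0
      rw [show (2 * ((-(2 * (N₂ : ℤ)) : ℤ) : ℝ) + 1) * t = -((4 * (N₂ : ℝ) - 1) * t) by
        push_cast; ring, Real.cos_neg, sub_self, mul_zero]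
    · show (a - c) / (2 * Real.cos t) *
        (Real.cos ((2 * ((2 * (N₂ : ℤ) - 1 : ℤ) : ℝ) + 1) * t)
          - Real.cos ((4 * (N₂ : ℝ) - 1) * t)) = 0
      rw [show (2 * ((2 * (N₂ : ℤ) - 1 : ℤ) : ℝ) + 1) * t = (4 * (N₂ : ℝ) - 1) * t by
        push_cast; ring, sub_self, mul_zero]
    · intro m h1 h2
      exact mul_pos (by positivity)
        (sub_pos.mpr (cos_boundary_pos N₂ t htpos hπ2 m h1 h2))
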